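/- Let p = 1, r > 0, v ∈ ℝ^n with r < ‖v‖_1 and |v_1| ≥ ⋯ ≥ |v_n| ≥ |v_{n+1}| = 0. Define A(m) = Σ_{j=1}^m (|v_j| − |v_{m+1}|), m_1 = max{m : A(m−1) < r}, m_0 = min{m : A(m) > r}. Then z* ∈ [0,1]^n minimizes G(z) = (r − ⟨z,|v|⟩)/‖z‖_1 over the unit sup-ball if and only if z*_i = 1 for i ≤ m_1 and z*_i = 0 for i > m_0 (with z*_i ∈ [0,1] arbitrary for m_1 < i ≤ m_0). -/

import Mathlib

open Finset

set_option maxHeartbeats 1000000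

/-- Exact solution of the inner subproblem, Scenario 2 (`p = 1`, `r < ‖v‖₁`): with
`A(m) = Σ_{j≤m}(|v_j| − |v_{m+1}|)`, `m₁ = max{m ∈ {1,…,n} : A(m−1) < r}` and
`m₀ = min{m : A(m) > r}`, a vector `z* ∈ [0,1]^n` minimizes
`G(z) = (r − ⟨z,|v|⟩)/‖z‖₁` over the unit sup-ball iff `z*_i = 1` for the first `m₁`
coordinates and `z*_i = 0` beyond the first `m₀`.  (Indices are 0-based.) -/
theorem stmt14 {n : ℕ}
    (v : Fin n → ℝ) (r : ℝ) (hr : 0 < r) (hlt : r < ∑ i, |v i|)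
    (hord : ∀ i j : Fin n, i ≤ j → |v j| ≤ |v i|)
    (a : ℕ → ℝ) (ha : ∀ j, a j = if h : j < n then |v ⟨j, h⟩| else 0)
    (A : ℕ → ℝ) (hA : ∀ m, A m = ∑ j ∈ Finset.range m, (a j - a m))
    (m₁ : ℕ) (hm₁ : m₁ = sSup {m : ℕ | 1 ≤ m ∧ m ≤ n ∧ A (m - 1) < r})
    (m₀ : ℕ) (hm₀ : m₀ = sInf {m : ℕ | 1 ≤ m ∧ r < A m})
    (zs : Fin n → ℝ) (hbox : ∀ i, zs i ∈ Set.Icc (0 : ℝ) 1) :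
    (∀ y : Fin n → ℝ, ‖y‖ ≤ 1 →
        (r - ∑ i, zs i * |v i|) / (∑ i, |zs i|) ≤ (r - ∑ i, y i * |v i|) / (∑ i, |y i|))
      ↔ ((∀ i : Fin n, (i : ℕ) < m₁ → zs i = 1) ∧
          ∀ i : Fin n, m₀ ≤ (i : ℕ) → zs i = 0) := by
  have hn : 0 < n := by
    rcases Nat.eq_zero_or_pos n with h | h
    · subst h; simp at hlt; linarith
    · exact h
  set S : ℕ → ℝ := fun m => ∑ j ∈ Finset.range m, a j with hS
  have hfin : ∀ i : Fin n, a (i : ℕ) = |v i| := by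
    intro i; rw [ha]; rw [dif_pos i.isLt]
  have ha_nonneg : ∀ j, 0 ≤ a j := by
    intro j; rw [ha]; split
    · exact abs_nonneg _
    · exact le_refl 0
  have ha_anti : ∀ j k : ℕ, j ≤ k → a k ≤ a j := by
    intro j k hjk
    by_cases hk : k < n
    · have hj : j < n := lt_of_le_of_lt hjk hk
      rw [ha j, ha k, dif_pos hj, dif_pos hk]
      exact hord ⟨j, hj⟩ ⟨k, hk⟩ hjk
    · rw [ha k, dif_neg hk]; exact ha_nonneg j
  have hAS : ∀ m, A m = S m - m * a m := by
    intro m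
    rw [hA, Finset.sum_sub_distrib, Finset.sum_const, Finset.card_range, nsmul_eq_mul]
  have hSn : S n = ∑ i, |v i| := by
    simp only [hS]
    rw [← Fin.sum_univ_eq_sum_range (fun j => a j) n]
    exact Finset.sum_congr rfl (fun i _ => hfin i)
  have hSmono : ∀ j k : ℕ, j ≤ k → S j ≤ S k := by
    intro j k hjk
    exact Finset.sum_le_sum_of_subset_of_nonneg (Finset.range_subset_range.mpr hjk)
      (fun i _ _ => ha_nonneg i)
  have hAmono : Monotone A := by
    apply monotone_nat_of_le_succ
    intro m
    have h1 : a (m + 1) ≤ a m := ha_anti m (m + 1) (Nat.le_succ m)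
    have h2 : S (m + 1) = S m + a m := by rw [hS]; exact Finset.sum_range_succ _ m
    have h3 : (0:ℝ) ≤ (m + 1 : ℝ) * (a m - a (m + 1)) := by
      apply mul_nonneg (by positivity) (by linarith)
    rw [hAS m, hAS (m + 1), h2]
    push_cast
    nlinarith
  have hAn : ∀ m, n ≤ m → A m = S n := by
    intro m hm
    have h0 : a m = 0 := by rw [ha, dif_neg (by omega)]
    have h1 : S m = S n := by
      rw [hS]
      have : ∀ j ∈ Finset.range m, j ∉ Finset.range n → a j = 0 := by
        intro j _ hj
        rw [ha, dif_neg (by simp at hj; omega)]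
      exact (Finset.sum_subset (Finset.range_subset_range.mpr hm) this).symm
    rw [hAS, h0, h1]; ring
  -- m₁ facts
  have hA0 : A 0 = 0 := by rw [hA]; simp
  have hm₁mem : m₁ ∈ {m : ℕ | 1 ≤ m ∧ m ≤ n ∧ A (m - 1) < r} := by
    rw [hm₁]
    apply Nat.sSup_mem
    · exact ⟨1, le_refl 1, hn, by simpa [hA0] using hr⟩
    · exact ⟨n, fun m hm => hm.2.1⟩
  obtain ⟨hm₁1, hm₁n, hm₁r⟩ := hm₁mem
  have hm₁ub : ∀ m, 1 ≤ m → m ≤ n → A (m - 1) < r → m ≤ m₁ := by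
    intro m h1 h2 h3
    rw [hm₁]
    exact le_csSup ⟨n, fun k hk => hk.2.1⟩ ⟨h1, h2, h3⟩
  have hAm₁ : r ≤ A m₁ := by
    by_cases h : m₁ = n
    · rw [h, hAn n (le_refl n), hSn]; exact le_of_lt hlt
    · by_contra h'
      push_neg at h'
      have := hm₁ub (m₁ + 1) (by omega) (by omega) (by simpa using h')
      omega
  -- m₀ facts
  have hm₀mem : m₀ ∈ {m : ℕ | 1 ≤ m ∧ r < A m} := by
    rw [hm₀]
    exact Nat.sInf_mem ⟨n, hn, by rw [hAn n (le_refl n), hSn]; exact hlt⟩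
  obtain ⟨hm₀1, hm₀r⟩ := hm₀mem
  have hm₀n : m₀ ≤ n := by
    rw [hm₀]
    exact Nat.sInf_le ⟨hn, by rw [hAn n (le_refl n), hSn]; exact hlt⟩
  have hm₀lb : A (m₀ - 1) ≤ r := by
    by_cases h : m₀ = 1
    · rw [h]; simpa [hA0] using le_of_lt hr
    · by_contra h'
      push_neg at h'
      have hle : sInf {m : ℕ | 1 ≤ m ∧ r < A m} ≤ m₀ - 1 := Nat.sInf_le ⟨by omega, h'⟩
      rw [← hm₀] at hle
      omega
  have hm₁₀ : m₁ ≤ m₀ := by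
    by_contra h
    push_neg at h
    have : A m₀ ≤ A (m₁ - 1) := hAmono (by omega)
    linarith
  -- g
  set g : ℝ := (S m₁ - r) / m₁ with hg
  have hm₁pos : (0:ℝ) < (m₁ : ℝ) := by exact_mod_cast hm₁1
  have hgr : S m₁ = r + (m₁ : ℝ) * g := by
    rw [hg, mul_div_assoc', mul_div_cancel_left₀ _ hm₁pos.ne']; ring
  have hSsplit : ∀ j k : ℕ, j ≤ k → S k = S j + ∑ i ∈ Finset.Ico j k, a i := by
    intro j k hjk
    rw [hS]
    simp only [Finset.range_eq_Ico]
    exact (Finset.sum_Ico_consecutive _ (Nat.zero_le j) hjk).symm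
  have hAm₁' : A (m₁ - 1) = S m₁ - (m₁ : ℝ) * a (m₁ - 1) := by
    rw [hAS]
    have h2 : S m₁ = S (m₁ - 1) + a (m₁ - 1) := by
      rw [hS]
      have : m₁ = (m₁ - 1) + 1 := by omega
      rw [this]
      exact Finset.sum_range_succ _ _
    have h3 : ((m₁ - 1 : ℕ) : ℝ) = (m₁ : ℝ) - 1 := by
      have : (1:ℕ) ≤ m₁ := hm₁1
      push_cast [this]; ring
    rw [h3, h2]; ring
  have hK1 : ∀ j, j < m₁ → g < a j := by
    intro j hj
    have h1 : a (m₁ - 1) ≤ a j := ha_anti j (m₁ - 1) (by omega)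
    have h2 : S m₁ - (m₁ : ℝ) * a (m₁ - 1) < r := by rw [← hAm₁']; exact hm₁r
    have : g < a (m₁ - 1) := by
      rw [hg, div_lt_iff₀ hm₁pos]
      nlinarith
    linarith
  have hK2 : ∀ j, m₁ ≤ j → a j ≤ g := by
    intro j hj
    have h1 : a j ≤ a m₁ := ha_anti m₁ j hj
    have h2 : r ≤ S m₁ - (m₁ : ℝ) * a m₁ := by rw [← hAS]; exact hAm₁
    have : a m₁ ≤ g := by
      rw [hg, le_div_iff₀ hm₁pos]
      nlinarith
    linarith
  have hm₀pos : (0:ℝ) < (m₀ : ℝ) := by exact_mod_cast hm₀1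
  have hK3 : ∀ j, m₀ ≤ j → a j < g := by
    intro j hj
    have h1 : a j ≤ a m₀ := ha_anti m₀ j hj
    have hS0 : S m₀ ≤ S m₁ + ((m₀ : ℝ) - (m₁ : ℝ)) * g := by
      rw [hSsplit m₁ m₀ hm₁₀]
      have : ∑ i ∈ Finset.Ico m₁ m₀, a i ≤ ∑ i ∈ Finset.Ico m₁ m₀, g :=
        Finset.sum_le_sum (fun i hi => hK2 i (Finset.mem_Ico.mp hi).1)
      have hc : ∑ i ∈ Finset.Ico m₁ m₀, g = ((m₀ : ℝ) - (m₁ : ℝ)) * g := by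
        rw [Finset.sum_const, Nat.card_Ico, nsmul_eq_mul]
        congr 1
        push_cast [hm₁₀]; ring
      linarith [hc ▸ this]
    have h2 : r < S m₀ - (m₀ : ℝ) * a m₀ := by rw [← hAS]; exact hm₀r
    have : a m₀ < g := by nlinarith
    linarith
  have hK4 : ∀ j, m₁ ≤ j → j < m₀ → a j = g := by
    intro j hj1 hj2
    refine le_antisymm (hK2 j hj1) ?_
    have hm : m₁ ≤ m₀ - 1 := by omega
    have h1 : a (m₀ - 1) ≤ a j := ha_anti j (m₀ - 1) (by omega)
    have hS1 : S m₁ + ((m₀ : ℝ) - 1 - (m₁ : ℝ)) * a (m₀ - 1) ≤ S (m₀ - 1) := by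
      rw [hSsplit m₁ (m₀ - 1) hm]
      have : ∑ i ∈ Finset.Ico m₁ (m₀ - 1), a (m₀ - 1) ≤ ∑ i ∈ Finset.Ico m₁ (m₀ - 1), a i :=
        Finset.sum_le_sum (fun i hi => ha_anti i (m₀ - 1) (le_of_lt (Finset.mem_Ico.mp hi).2))
      have hc : ∑ i ∈ Finset.Ico m₁ (m₀ - 1), a (m₀ - 1)
          = ((m₀ : ℝ) - 1 - (m₁ : ℝ)) * a (m₀ - 1) := by
        rw [Finset.sum_const, Nat.card_Ico, nsmul_eq_mul]
        congr 1
        have : (1:ℕ) ≤ m₀ := hm₀1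
        push_cast [hm, this]
        ring
      linarith [hc ▸ this]
    have h2 : S (m₀ - 1) - ((m₀ : ℝ) - 1) * a (m₀ - 1) ≤ r := by
      have := hAS (m₀ - 1)
      have hc : ((m₀ - 1 : ℕ) : ℝ) = (m₀ : ℝ) - 1 := by
        have : (1:ℕ) ≤ m₀ := hm₀1
        push_cast [this]; ring
      rw [hc] at this
      linarith [hm₀lb, this.symm.le, this.le]
    have hgle : g ≤ a (m₀ - 1) := by
      rw [hg, div_le_iff₀ hm₁pos]
      nlinarith
    linarith
  have hg0 : 0 < g := by
    rw [hg]
    apply div_pos _ hm₁pos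
    by_cases hc : a m₁ ≤ 0
    · have ham : a m₁ = 0 := le_antisymm hc (ha_nonneg m₁)
      have : S n = S m₁ := by
        rw [hSsplit m₁ n hm₁n]
        have : ∑ i ∈ Finset.Ico m₁ n, a i = 0 := by
          apply Finset.sum_eq_zero
          intro i hi
          have := ha_anti m₁ i (Finset.mem_Ico.mp hi).1
          have := ha_nonneg i
          linarith
        linarith
      rw [← this, hSn]; linarith
    · push_neg at hc
      have h2 : r ≤ S m₁ - (m₁ : ℝ) * a m₁ := by rw [← hAS]; exact hAm₁
      nlinarith
  -- translation of truncated sums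
  have htrans : ∀ f : ℕ → ℝ, ∑ i : Fin n, (if (i : ℕ) < m₁ then f (i : ℕ) else 0)
      = ∑ j ∈ Finset.range m₁, f j := by
    intro f
    rw [Fin.sum_univ_eq_sum_range (fun j => if j < m₁ then f j else 0) n]
    rw [← Finset.sum_subset (Finset.range_subset_range.mpr hm₁n)
      (by intro j _ hj; simp at hj; rw [if_neg (by omega)])]
    exact Finset.sum_congr rfl (fun j hj => if_pos (Finset.mem_range.mp hj))
  have hsum_bound : ∑ i : Fin n, (if (i : ℕ) < m₁ then |v i| - g else 0) = r := by
    have h1 : ∑ i : Fin n, (if (i : ℕ) < m₁ then |v i| - g else 0)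
        = ∑ i : Fin n, (if (i : ℕ) < m₁ then a (i : ℕ) - g else 0) := by
      apply Finset.sum_congr rfl
      intro i _
      rw [hfin i]
    rw [h1, htrans (fun j => a j - g), Finset.sum_sub_distrib, Finset.sum_const,
      Finset.card_range, nsmul_eq_mul]
    have : (∑ j ∈ Finset.range m₁, a j) = S m₁ := rfl
    rw [this, hgr]; ring
  -- core inequality
  have hL : ∀ w : Fin n → ℝ, (∀ i, 0 ≤ w i) → (∀ i, w i ≤ 1) →
      ∑ i, w i * |v i| ≤ r + g * ∑ i, w i := by
    intro w h0 h1
    have key : ∑ i, (w i * |v i| - g * w i)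
        ≤ ∑ i : Fin n, (if (i : ℕ) < m₁ then |v i| - g else 0) := by
      apply Finset.sum_le_sum
      intro i _
      by_cases hi : (i : ℕ) < m₁
      · rw [if_pos hi]
        have := hK1 (i : ℕ) hi
        rw [hfin i] at this
        nlinarith [h0 i, h1 i]
      · rw [if_neg hi]
        have := hK2 (i : ℕ) (by omega)
        rw [hfin i] at this
        nlinarith [h0 i, h1 i]
    rw [hsum_bound] at key
    rw [Finset.sum_sub_distrib, ← Finset.mul_sum] at key
    linarith
  -- zs abs
  have hzsabs : ∀ i, |zs i| = zs i := fun i => abs_of_nonneg (hbox i).1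
  have hzssum : ∑ i, |zs i| = ∑ i, zs i := Finset.sum_congr rfl (fun i _ => hzsabs i)
  constructor
  · -- forward
    intro hopt
    set ys : Fin n → ℝ := fun i => if (i : ℕ) < m₁ then (1:ℝ) else 0 with hys
    have hysnorm : ‖ys‖ ≤ 1 := by
      rw [pi_norm_le_iff_of_nonneg zero_le_one]
      intro i
      simp only [hys, Real.norm_eq_abs]
      split <;> simp
    have hys1 : ∑ i, ys i * |v i| = S m₁ := by
      have h1 : ∀ i : Fin n, ys i * |v i| = (if (i : ℕ) < m₁ then a (i : ℕ) else 0) := by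
        intro i
        simp only [hys]
        split <;> simp [hfin i]
      rw [Finset.sum_congr rfl (fun i _ => h1 i), htrans (fun j => a j)]
    have hys2 : ∑ i, |ys i| = (m₁ : ℝ) := by
      have h1 : ∀ i : Fin n, |ys i| = (if (i : ℕ) < m₁ then (1:ℝ) else 0) := by
        intro i
        simp only [hys]
        split <;> simp
      rw [Finset.sum_congr rfl (fun i _ => h1 i), htrans (fun _ => (1:ℝ))]
      simp
    have h1 := hopt ys hysnorm
    rw [hys1, hys2] at h1
    have hGys : (r - S m₁) / (m₁ : ℝ) = -g := by
      rw [hg]; field_simp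
      ring
    rw [hGys] at h1
    -- T positive
    have hT0 : 0 < ∑ i, zs i := by
      rcases lt_or_eq_of_le (Finset.sum_nonneg (fun i _ => (hbox i).1)) with h | h
      · exact h
      · exfalso
        have hz0 : ∀ i ∈ Finset.univ, zs i = 0 := by
          intro i _
          have := (Finset.sum_eq_zero_iff_of_nonneg (fun i _ => (hbox i).1)).mp h.symm
          exact this i (Finset.mem_univ i)
        have e1 : ∑ i, zs i * |v i| = 0 :=
          Finset.sum_eq_zero (fun i hi => by rw [hz0 i hi]; ring)
        have e2 : ∑ i, |zs i| = 0 := by rw [hzssum, ← h]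
        rw [e1, e2] at h1
        simp at h1
        linarith
    have hTabs : 0 < ∑ i, |zs i| := by rw [hzssum]; exact hT0
    have h2 : ∑ i, zs i * |v i| ≥ r + g * ∑ i, zs i := by
      rw [div_le_iff₀ hTabs] at h1
      rw [hzssum] at h1
      nlinarith
    have h3 : ∑ i, zs i * |v i| ≤ r + g * ∑ i, zs i :=
      hL zs (fun i => (hbox i).1) (fun i => (hbox i).2)
    have heq4 : ∑ i, (zs i * |v i| - g * zs i) = r := by
      rw [Finset.sum_sub_distrib, ← Finset.mul_sum]
      linarith
    set F : Fin n → ℝ :=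
      fun i => (if (i : ℕ) < m₁ then |v i| - g else 0) - (zs i * |v i| - g * zs i) with hF
    have hFnn : ∀ i ∈ Finset.univ, 0 ≤ F i := by
      intro i _
      simp only [hF]
      by_cases hi : (i : ℕ) < m₁
      · rw [if_pos hi]
        have := hK1 (i : ℕ) hi
        rw [hfin i] at this
        nlinarith [(hbox i).1, (hbox i).2]
      · rw [if_neg hi]
        have := hK2 (i : ℕ) (by omega)
        rw [hfin i] at this
        nlinarith [(hbox i).1, (hbox i).2]
    have hFsum : ∑ i, F i = 0 := by
      simp only [hF]
      rw [Finset.sum_sub_distrib, hsum_bound, heq4]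
      ring
    have hF0 : ∀ i : Fin n, F i = 0 := by
      intro i
      exact (Finset.sum_eq_zero_iff_of_nonneg hFnn).mp hFsum i (Finset.mem_univ i)
    constructor
    · intro i hi
      have := hF0 i
      simp only [hF, if_pos hi] at this
      have hgt := hK1 (i : ℕ) hi
      rw [hfin i] at hgt
      have hkey : (1 - zs i) * (|v i| - g) = 0 := by linarith [this]
      rcases mul_eq_zero.mp hkey with h | h
      · linarith
      · linarith
    · intro i hi
      have := hF0 i
      have hni : ¬ ((i : ℕ) < m₁) := by omega
      simp only [hF, if_neg hni] at this
      have hlt' := hK3 (i : ℕ) hi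
      rw [hfin i] at hlt'
      have hkey : zs i * (|v i| - g) = 0 := by linarith [this]
      rcases mul_eq_zero.mp hkey with h | h
      · exact h
      · linarith
  · -- backward
    rintro ⟨h1, h0⟩ y hy
    -- value of G at zs
    have hzsval : ∑ i, zs i * |v i| = r + g * ∑ i, zs i := by
      have hterm : ∀ i : Fin n, zs i * |v i| - g * zs i
          = (if (i : ℕ) < m₁ then |v i| - g else 0) := by
        intro i
        by_cases hi : (i : ℕ) < m₁
        · rw [if_pos hi, h1 i hi]; ring
        · rw [if_neg hi]
          by_cases hi0 : m₀ ≤ (i : ℕ)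
          · rw [h0 i hi0]; ring
          · have : a (i : ℕ) = g := hK4 (i : ℕ) (by omega) (by omega)
            rw [hfin i] at this
            rw [this]; ring
      have := Finset.sum_congr rfl (fun i (_ : i ∈ Finset.univ) => hterm i)
      rw [Finset.sum_sub_distrib, ← Finset.mul_sum, hsum_bound] at this
      linarith
    have hTge : (m₁ : ℝ) ≤ ∑ i, zs i := by
      have : ∑ i : Fin n, (if (i : ℕ) < m₁ then (1:ℝ) else 0) ≤ ∑ i, zs i := by
        apply Finset.sum_le_sum
        intro i _
        by_cases hi : (i : ℕ) < m₁
        · rw [if_pos hi, h1 i hi]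
        · rw [if_neg hi]; exact (hbox i).1
      rw [htrans (fun _ => (1:ℝ))] at this
      simpa using this
    have hTpos : 0 < ∑ i, |zs i| := by rw [hzssum]; linarith
    have hGzs : (r - ∑ i, zs i * |v i|) / (∑ i, |zs i|) = -g := by
      rw [hzsval, hzssum]
      have : r - (r + g * ∑ i, zs i) = -g * ∑ i, zs i := by ring
      rw [this, mul_div_assoc, div_self (by rw [hzssum] at hTpos; linarith)]
      ring
    rw [hGzs]
    -- bound G at y
    have hyle : ∀ i, |y i| ≤ 1 := by
      intro i
      calc |y i| = ‖y i‖ := (Real.norm_eq_abs _).symm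
        _ ≤ ‖y‖ := norm_le_pi_norm y i
        _ ≤ 1 := hy
    by_cases hTy : ∑ i, |y i| = 0
    · rw [hTy, div_zero]
      have hy0 : ∀ i : Fin n, y i = 0 := by
        intro i
        have := (Finset.sum_eq_zero_iff_of_nonneg
          (fun i (_ : i ∈ Finset.univ) => abs_nonneg (y i))).mp hTy i (Finset.mem_univ i)
        exact abs_eq_zero.mp this
      linarith
    · have hTypos : 0 < ∑ i, |y i| :=
        lt_of_le_of_ne (Finset.sum_nonneg (fun i _ => abs_nonneg (y i))) (Ne.symm hTy)
      have hya : ∑ i, y i * |v i| ≤ ∑ i, |y i| * |v i| :=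
        Finset.sum_le_sum (fun i _ =>
          mul_le_mul_of_nonneg_right (le_abs_self (y i)) (abs_nonneg (v i)))
      have hyb : ∑ i, |y i| * |v i| ≤ r + g * ∑ i, |y i| :=
        hL (fun i => |y i|) (fun i => abs_nonneg (y i)) hyle
      rw [le_div_iff₀ hTypos]
      nlinarith
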